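/- For every closed subspace X_H ⊆ X (in particular for X_H = X), there exists a unique element u_H⋆ ∈ X_H such that ⟪A u_H⋆, v_H⟫ = ⟪f, v_H⟫ for all v_H ∈ X_H. -/

import Mathlib

open RealInnerProductSpace

/-- Main theorem on strongly monotone operators (existence and uniqueness of Galerkin
solutions): for every closed subspace `K` of a real Hilbert space `X` (in particular for
`K = X` itself), there is a unique `u ∈ K` with `⟪A u, v⟫ = ⟪f, v⟫` for all `v ∈ K`. -/
theorem stmt_2 {X : Type*} [NormedAddCommGroup X] [InnerProductSpace ℝ X] [CompleteSpace X]
    (A : X → X) (f : X) (α L : ℝ) (hα : 0 < α) (hαL : α ≤ L)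
    (hmono : ∀ v w : X, α * ‖w - v‖ ^ 2 ≤ ⟪A w - A v, w - v⟫)
    (hlip : ∀ v w : X, ‖A w - A v‖ ≤ L * ‖w - v‖)
    (K : Submodule ℝ X) (hK : IsClosed (K : Set X)) :
    ∃! u : X, u ∈ K ∧ ∀ v ∈ K, ⟪A u, v⟫ = ⟪f, v⟫ := by
  have hL : 0 < L := lt_of_lt_of_le hα hαL
  haveI : CompleteSpace K := hK.completeSpace_coe
  set ρ : ℝ := α / L ^ 2 with hρdef
  have hρ : 0 < ρ := div_pos hα (by positivity)
  set P := K.orthogonalProjectionOnto with hP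
  -- projection preserves inner products against elements of K
  have hPinner : ∀ (x : X) (k : X), k ∈ K → ⟪(P x : X), k⟫ = ⟪x, k⟫ := by
    intro x k hk
    have h := K.starProjection_inner_eq_zero x k hk
    have h2 : ⟪x, k⟫ - ⟪(P x : X), k⟫ = 0 := by
      rw [← inner_sub_left]; exact h
    linarith
  have hPnorm : ∀ x : X, ‖(P x : X)‖ ≤ ‖x‖ := by
    intro x
    calc ‖(P x : X)‖ ≤ ‖P‖ * ‖x‖ := P.le_opNorm x
    _ ≤ 1 * ‖x‖ :=
        mul_le_mul_of_nonneg_right (Submodule.orthogonalProjectionOnto_norm_le K) (norm_nonneg x)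
    _ = ‖x‖ := one_mul ‖x‖
  -- the contraction map
  set T : K → K := fun u => u - ρ • P (A u - f) with hT
  set c : ℝ := 1 - α ^ 2 / L ^ 2 with hc
  have hαL2 : α ^ 2 / L ^ 2 ≤ 1 := by
    rw [div_le_one (by positivity)]; nlinarith
  have hc0 : 0 ≤ c := by rw [hc]; linarith
  have hc1 : c < 1 := by
    have : 0 < α ^ 2 / L ^ 2 := by positivity
    rw [hc]; linarith
  set γ : ℝ := Real.sqrt c with hγ
  have hγ0 : 0 ≤ γ := Real.sqrt_nonneg c
  have hγ1 : γ < 1 := by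
    rw [hγ, show (1 : ℝ) = Real.sqrt 1 by simp]
    exact Real.sqrt_lt_sqrt hc0 (by simpa using hc1)
  -- contraction estimate
  have key : ∀ u v : K, ‖(T u : X) - T v‖ ≤ γ * ‖(u : X) - v‖ := by
    intro u v
    have hdiff : (T u : X) - T v = ((u : X) - v) - ρ • (P (A u - A v) : X) := by
      have h3 : P (A u - f) - P (A v - f) = P ((A u : X) - A v) := by
        rw [← map_sub]; congr 1; abel
      rw [← h3]
      push_cast [hT]
      module
    set a : X := (u : X) - v with ha
    set b : X := (P ((A u : X) - A v) : X) with hb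
    have hmono' : α * ‖a‖ ^ 2 ≤ ⟪b, a⟫ := by
      rw [hb, hPinner _ _ (Submodule.sub_mem K u.2 v.2)]
      exact hmono v u
    have hbnorm : ‖b‖ ≤ L * ‖a‖ :=
      le_trans (hPnorm _) (hlip v u)
    have expand : ‖a - ρ • b‖ ^ 2 = ‖a‖ ^ 2 - 2 * ρ * ⟪b, a⟫ + ρ ^ 2 * ‖b‖ ^ 2 := by
      rw [norm_sub_sq_real, norm_smul, real_inner_smul_right]
      simp [abs_of_pos hρ]
      rw [real_inner_comm a b]
      ring
    have hb2 : ρ ^ 2 * ‖b‖ ^ 2 ≤ ρ ^ 2 * (L * ‖a‖) ^ 2 := by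
      apply mul_le_mul_of_nonneg_left _ (by positivity)
      exact pow_le_pow_left₀ (norm_nonneg b) hbnorm 2
    have h1 : 2 * ρ * (α * ‖a‖ ^ 2) ≤ 2 * ρ * ⟪b, a⟫ :=
      mul_le_mul_of_nonneg_left hmono' (by positivity)
    have heq : ‖a‖ ^ 2 - 2 * ρ * (α * ‖a‖ ^ 2) + ρ ^ 2 * (L * ‖a‖) ^ 2 = c * ‖a‖ ^ 2 := by
      rw [hρdef, hc]
      field_simp
      ring
    have hsq : ‖a - ρ • b‖ ^ 2 ≤ c * ‖a‖ ^ 2 := by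
      rw [expand]; linarith
    have hfin : ‖a - ρ • b‖ ≤ γ * ‖a‖ := by
      have h := Real.sqrt_le_sqrt hsq
      rwa [Real.sqrt_sq (norm_nonneg _), Real.sqrt_mul hc0, Real.sqrt_sq (norm_nonneg _)] at h
    rw [hdiff]; exact hfin
  -- ContractingWith
  have hcontr : ContractingWith ⟨γ, hγ0⟩ T := by
    refine ⟨by exact_mod_cast hγ1, LipschitzWith.of_dist_le_mul fun u v => ?_⟩
    rw [Subtype.dist_eq, Subtype.dist_eq, dist_eq_norm, dist_eq_norm]
    exact key u v
  haveI : Nonempty K := ⟨0⟩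
  set u₀ : K := hcontr.fixedPoint T with hu₀def
  have hfix : T u₀ = u₀ := hcontr.fixedPoint_isFixedPt
  have hPzero : P ((A u₀ : X) - f) = 0 := by
    have h4 : (u₀ : K) - ρ • P ((A u₀ : X) - f) = u₀ := hfix
    have h5 : ρ • P ((A u₀ : X) - f) = 0 := sub_eq_self.mp h4
    rcases smul_eq_zero.mp h5 with h | h
    · exact absurd h (ne_of_gt hρ)
    · exact h
  have hsol : ∀ v ∈ K, ⟪A (u₀ : X), v⟫ = ⟪f, v⟫ := by
    intro v hv
    have h6 : ⟪((P ((A u₀ : X) - f) : K) : X), v⟫ = ⟪(A u₀ : X) - f, v⟫ :=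
      hPinner _ _ hv
    rw [hPzero] at h6
    simp only [Submodule.coe_zero, inner_zero_left] at h6
    have h7 : ⟪(A u₀ : X) - f, v⟫ = 0 := h6.symm
    rw [inner_sub_left] at h7
    linarith
  refine ⟨u₀, ⟨u₀.2, hsol⟩, ?_⟩
  rintro y ⟨hyK, hy⟩
  -- uniqueness via strong monotonicity
  have hd : ⟪A y - A (u₀ : X), y - u₀⟫ = 0 := by
    rw [inner_sub_left, hy _ (Submodule.sub_mem K hyK u₀.2),
        hsol _ (Submodule.sub_mem K hyK u₀.2)]
    ring
  have h8 := hmono (u₀ : X) y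
  rw [hd] at h8
  have h9 : ‖y - (u₀ : X)‖ ^ 2 ≤ 0 := by
    have h8' : α * ‖y - (u₀ : X)‖ ^ 2 ≤ α * 0 := by rw [mul_zero]; exact h8
    exact le_of_mul_le_mul_left h8' hα
  have h10 : ‖y - (u₀ : X)‖ = 0 := by
    have hnn := sq_nonneg ‖y - (u₀ : X)‖
    have : ‖y - (u₀ : X)‖ ^ 2 = 0 := le_antisymm h9 hnn
    exact pow_eq_zero_iff (by norm_num) |>.mp this
  have := norm_eq_zero.mp h10
  exact sub_eq_zero.mp this
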